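/- The first-order property ∀y (Rxy ∨ Ryx) (totality/connectedness with the evaluation point) is not definable by any MLSR formula. Specifically: let M be the model consisting of two isolated reflexive points and N the model consisting of two points with the universal accessibility relation (both with empty valuation). Then every point of N satisfies ∀y (Rxy ∨ Ryx) while no point of M does, yet (M, s) and (N, t) satisfy exactly the same MLSR formulas for any points s, t, because the universal relation between the pointed models (M, x) and (N, y), together with all links between the one-point pointed submodels of M and N, is an SR-bisimulation. -/
import Mathlib


/-- MLSR syntax: atoms, ⊤, ¬, ∨, ◇, and the removal modality ⟨-φ⟩ψ. -/
inductive Form : Type where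
  | atom : ℕ → Form
  | top : Form
  | neg : Form → Form
  | or : Form → Form → Form
  | dia : Form → Form
  | rem : Form → Form → Form

/-- A relational model. -/
structure Model (W : Type) where
  R : W → W → Prop
  V : ℕ → W → Prop

/-- Truth relative to a current domain `D ⊆ W` (submodel semantics);
`M - {t}` is represented by shrinking the domain to `D \ {t}`. -/
def Sat {W : Type} (M : Model W) : Form → Set W → W → Prop
  | .atom p, _, s => M.V p s
  | .top, _, _ => True
  | .neg φ, D, s => ¬ Sat M φ D s
  | .or φ ψ, D, s => Sat M φ D s ∨ Sat M ψ D s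
  | .dia φ, D, s => ∃ t ∈ D, M.R s t ∧ Sat M φ D t
  | .rem φ ψ, D, s => ∃ t ∈ D, t ≠ s ∧ Sat M φ D t ∧ Sat M ψ (D \ {t}) s

/-- Two isolated reflexive points. -/
def Mrefl : Model Bool := ⟨fun x y => x = y, fun _ _ => False⟩
/-- Two points with the universal relation. -/
def Nuniv : Model Bool := ⟨fun _ _ => True, fun _ _ => False⟩

/-- ∀y (Rxy ∨ Ryx) is not MLSR-definable: every point of `Nuniv` satisfies it,
no point of `Mrefl` does, yet the two models satisfy exactly the same MLSR
formulas at every point; hence no MLSR formula defines this property. -/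
theorem stmt5 :
    (∀ t : Bool, ∀ y, Nuniv.R t y ∨ Nuniv.R y t) ∧
    (∀ s : Bool, ¬ ∀ y, Mrefl.R s y ∨ Mrefl.R y s) ∧
    (∀ (φ : Form) (s t : Bool), Sat Mrefl φ Set.univ s ↔ Sat Nuniv φ Set.univ t) ∧
    ¬ ∃ φ : Form, ∀ (W : Type) (M : Model W) (s : W),
        Sat M φ Set.univ s ↔ ∀ y, M.R s y ∨ M.R y s := by
  have hset : ∀ s : Bool, (Set.univ \ {!s} : Set Bool) = {s} := by
    intro s; ext b; cases s <;> cases b <;> simp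
  have hne : ∀ u s : Bool, u ≠ s → u = !s := by decide
  have key : ∀ φ : Form,
      (∀ s t : Bool, Sat Mrefl φ Set.univ s ↔ Sat Nuniv φ Set.univ t) ∧
      (∀ s t : Bool, Sat Mrefl φ {s} s ↔ Sat Nuniv φ {t} t) := by
    intro φ
    induction φ with
    | atom p => simp [Sat, Mrefl, Nuniv]
    | top => simp [Sat]
    | neg φ ih =>
        exact ⟨fun s t => not_congr (ih.1 s t), fun s t => not_congr (ih.2 s t)⟩
    | or φ ψ ih1 ih2 =>
        exact ⟨fun s t => or_congr (ih1.1 s t) (ih2.1 s t),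
               fun s t => or_congr (ih1.2 s t) (ih2.2 s t)⟩
    | dia φ ih =>
        constructor
        · intro s t
          constructor
          · rintro ⟨u, -, -, hu⟩
            exact ⟨t, trivial, trivial, (ih.1 u t).1 hu⟩
          · rintro ⟨u, -, -, hu⟩
            exact ⟨s, trivial, rfl, (ih.1 s u).2 hu⟩
        · intro s t
          constructor
          · rintro ⟨u, hu, -, hsat⟩
            rcases hu with rfl
            exact ⟨t, rfl, trivial, (ih.2 u t).1 hsat⟩
          · rintro ⟨u, hu, -, hsat⟩
            rcases hu with rfl
            exact ⟨s, rfl, rfl, (ih.2 s u).2 hsat⟩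
    | rem φ ψ ih1 ih2 =>
        constructor
        · intro s t
          constructor
          · rintro ⟨u, -, hus, hφ, hψ⟩
            rcases hne u s hus with rfl
            rw [hset s] at hψ
            refine ⟨!t, trivial, by simp, (ih1.1 (!s) (!t)).1 hφ, ?_⟩
            rw [hset t]
            exact (ih2.2 s t).1 hψ
          · rintro ⟨u, -, hut, hφ, hψ⟩
            rcases hne u t hut with rfl
            rw [hset t] at hψ
            refine ⟨!s, trivial, by simp, (ih1.1 (!s) (!t)).2 hφ, ?_⟩
            rw [hset s]
            exact (ih2.2 s t).2 hψ
        · intro s t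
          constructor
          · rintro ⟨u, hu, hus, -⟩
            rcases hu with rfl
            exact absurd rfl hus
          · rintro ⟨u, hu, hut, -⟩
            rcases hu with rfl
            exact absurd rfl hut
  refine ⟨fun t y => Or.inl trivial, ?_, fun φ s t => (key φ).1 s t, ?_⟩
  · intro s h
    have := h (!s)
    cases s <;> simp [Mrefl] at this
  · rintro ⟨φ, h⟩
    have h1 : Sat Nuniv φ Set.univ true :=
      (h Bool Nuniv true).2 (fun y => Or.inl trivial)
    have h2 : Sat Mrefl φ Set.univ true := ((key φ).1 true true).2 h1
    have h3 := (h Bool Mrefl true).1 h2 false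
    simp [Mrefl] at h3
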